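/- Interpolation property of Weyl numbers: let 0 < θ < 1, let X, Y, Y₀, Y₁ be Banach spaces with Y₀ ∩ Y₁ continuously embedded in Y, and suppose there is C > 0 such that ‖y‖_Y ≤ C · ‖y‖_{Y₀}^{1−θ} · ‖y‖_{Y₁}^{θ} for all y ∈ Y₀ ∩ Y₁. If T is bounded from X to Y₀, to Y₁, and to Y (with range of T contained in Y₀ ∩ Y₁), then for all n, m ∈ ℕ: x_{n+m−1}(T : X → Y) ≤ C · x_n(T : X → Y₀)^{1−θ} · x_m(T : X → Y₁)^{θ}. -/

import Mathlib

noncomputable section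

open scoped ENNReal

/-- The `n`-th approximation number. -/
def approxNumber {X Y : Type*} [NormedAddCommGroup X] [NormedSpace ℝ X]
    [NormedAddCommGroup Y] [NormedSpace ℝ Y] (n : ℕ) (T : X →L[ℝ] Y) : ℝ :=
  sInf {c : ℝ | ∃ A : X →L[ℝ] Y, FiniteDimensional ℝ (LinearMap.range (A : X →ₗ[ℝ] Y)) ∧
    Module.finrank ℝ (LinearMap.range (A : X →ₗ[ℝ] Y)) < n ∧ ‖T - A‖ = c}

/-- The Hilbert sequence space `ℓ₂`. -/
abbrev Ell2 : Type := lp (fun _ : ℕ => ℝ) 2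

/-- The `n`-th Weyl number. -/
def weylNumber {X Y : Type*} [NormedAddCommGroup X] [NormedSpace ℝ X]
    [NormedAddCommGroup Y] [NormedSpace ℝ Y] (n : ℕ) (T : X →L[ℝ] Y) : ℝ :=
  ⨆ A : {A : Ell2 →L[ℝ] X // ‖A‖ ≤ 1}, approxNumber n (T.comp A.1)

namespace WeylAux

variable {X Y : Type*} [NormedAddCommGroup X] [NormedSpace ℝ X]
  [NormedAddCommGroup Y] [NormedSpace ℝ Y]

instance instNeBall : Nonempty {A : Ell2 →L[ℝ] X // ‖A‖ ≤ 1} := ⟨⟨0, by simp⟩⟩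

lemma range_zero_eq_bot : LinearMap.range (((0 : X →L[ℝ] Y)) : X →ₗ[ℝ] Y) = ⊥ := by
  ext y; simp [LinearMap.mem_range, eq_comm]

lemma fd_range_zero : FiniteDimensional ℝ (LinearMap.range (((0 : X →L[ℝ] Y)) : X →ₗ[ℝ] Y)) := by
  rw [range_zero_eq_bot]; infer_instance

lemma approxSet_bddBelow (n : ℕ) (T : X →L[ℝ] Y) :
    BddBelow {c : ℝ | ∃ A : X →L[ℝ] Y, FiniteDimensional ℝ (LinearMap.range (A : X →ₗ[ℝ] Y)) ∧
      Module.finrank ℝ (LinearMap.range (A : X →ₗ[ℝ] Y)) < n ∧ ‖T - A‖ = c} :=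
  ⟨0, fun _ ⟨_, _, _, hA⟩ => hA ▸ norm_nonneg _⟩

lemma zero_mem_approxSet {n : ℕ} (hn : 1 ≤ n) (T : X →L[ℝ] Y) :
    ‖T‖ ∈ {c : ℝ | ∃ A : X →L[ℝ] Y, FiniteDimensional ℝ (LinearMap.range (A : X →ₗ[ℝ] Y)) ∧
      Module.finrank ℝ (LinearMap.range (A : X →ₗ[ℝ] Y)) < n ∧ ‖T - A‖ = c} := by
  refine ⟨0, fd_range_zero, ?_, by rw [sub_zero]⟩
  rw [range_zero_eq_bot]
  simpa using (show 0 < n from hn)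

lemma approxNumber_le {n : ℕ} (T : X →L[ℝ] Y) (A : X →L[ℝ] Y)
    (h1 : FiniteDimensional ℝ (LinearMap.range (A : X →ₗ[ℝ] Y)))
    (h2 : Module.finrank ℝ (LinearMap.range (A : X →ₗ[ℝ] Y)) < n) :
    approxNumber n T ≤ ‖T - A‖ :=
  csInf_le (approxSet_bddBelow n T) ⟨A, h1, h2, rfl⟩

lemma approxNumber_le_norm {n : ℕ} (hn : 1 ≤ n) (T : X →L[ℝ] Y) :
    approxNumber n T ≤ ‖T‖ :=
  csInf_le (approxSet_bddBelow n T) (zero_mem_approxSet hn T)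

lemma weyl_bddAbove {n : ℕ} (hn : 1 ≤ n) (T : X →L[ℝ] Y) :
    BddAbove (Set.range fun A : {A : Ell2 →L[ℝ] X // ‖A‖ ≤ 1} =>
      approxNumber n (T.comp A.1)) := by
  refine ⟨‖T‖, ?_⟩
  rintro c ⟨A, rfl⟩
  refine (approxNumber_le_norm hn _).trans ?_
  calc ‖T.comp A.1‖ ≤ ‖T‖ * ‖A.1‖ := T.opNorm_comp_le A.1
    _ ≤ ‖T‖ * 1 := mul_le_mul_of_nonneg_left A.2 (norm_nonneg T)
    _ = ‖T‖ := mul_one _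

lemma approxNumber_le_weylNumber {n : ℕ} (hn : 1 ≤ n) (T : X →L[ℝ] Y)
    (A : Ell2 →L[ℝ] X) (hA : ‖A‖ ≤ 1) :
    approxNumber n (T.comp A) ≤ weylNumber n T :=
  le_ciSup (weyl_bddAbove hn T) (⟨A, hA⟩ : {A : Ell2 →L[ℝ] X // ‖A‖ ≤ 1})

lemma weylNumber_nonneg (n : ℕ) (T : X →L[ℝ] Y) : 0 ≤ weylNumber n T := by
  have h0 : (0 : ℝ) ≤ approxNumber n (T.comp (0 : Ell2 →L[ℝ] X)) :=
    Real.sInf_nonneg fun _ ⟨_, _, _, hA⟩ => hA ▸ norm_nonneg _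
  by_cases hn : 1 ≤ n
  · exact h0.trans (approxNumber_le_weylNumber hn T 0 (by simp))
  · -- n = 0 : every approxNumber is sInf ∅ = 0, so sup is 0
    have hn0 : n = 0 := by omega
    subst hn0
    have : ∀ A : {A : Ell2 →L[ℝ] X // ‖A‖ ≤ 1},
        approxNumber 0 (T.comp A.1) = 0 := by
      intro A
      have : {c : ℝ | ∃ B : Ell2 →L[ℝ] Y, FiniteDimensional ℝ (LinearMap.range (B : Ell2 →ₗ[ℝ] Y)) ∧
          Module.finrank ℝ (LinearMap.range (B : Ell2 →ₗ[ℝ] Y)) < 0 ∧ ‖T.comp A.1 - B‖ = c} = ∅ := by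
        ext c; simp
      rw [approxNumber, this, Real.sInf_empty]
    rw [weylNumber]
    simp only [this]
    simp [ciSup_const]

end WeylAux

set_option maxHeartbeats 1000000 in
open WeylAux in
/-- Interpolation property of Weyl numbers. We model the situation
`Y₀ ∩ Y₁ ↪ Y` by continuous linear maps `j₀ : Y₀ → Y`, `j₁ : Y₁ → Y`; the
operator `T : X → Y` factors through `Y₀` and through `Y₁` (via `T₀`, `T₁`),
and on the intersection `‖y‖_Y ≤ C ‖y‖_{Y₀}^{1-θ} ‖y‖_{Y₁}^{θ}`. Then
`x_{n+m-1}(T : X → Y) ≤ C · x_n(T : X → Y₀)^{1-θ} · x_m(T : X → Y₁)^{θ}`. -/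
theorem weyl_interpolation
    {X Y Y₀ Y₁ : Type*}
    [NormedAddCommGroup X] [NormedSpace ℝ X] [CompleteSpace X]
    [NormedAddCommGroup Y] [NormedSpace ℝ Y] [CompleteSpace Y]
    [NormedAddCommGroup Y₀] [NormedSpace ℝ Y₀] [CompleteSpace Y₀]
    [NormedAddCommGroup Y₁] [NormedSpace ℝ Y₁] [CompleteSpace Y₁]
    (θ : ℝ) (hθ₀ : 0 < θ) (hθ₁ : θ < 1) (C : ℝ) (hC : 0 < C)
    (j₀ : Y₀ →L[ℝ] Y) (j₁ : Y₁ →L[ℝ] Y)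
    (hnorm : ∀ (y₀ : Y₀) (y₁ : Y₁), j₀ y₀ = j₁ y₁ →
      ‖j₀ y₀‖ ≤ C * ‖y₀‖ ^ (1 - θ) * ‖y₁‖ ^ θ)
    (T : X →L[ℝ] Y) (T₀ : X →L[ℝ] Y₀) (T₁ : X →L[ℝ] Y₁)
    (hT₀ : ∀ x, T x = j₀ (T₀ x)) (hT₁ : ∀ x, T x = j₁ (T₁ x))
    (n m : ℕ) (hn : 1 ≤ n) (hm : 1 ≤ m) :
    weylNumber (n + m - 1) T ≤ C * weylNumber n T₀ ^ (1 - θ) * weylNumber m T₁ ^ θ := by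
  set a := weylNumber n T₀ with ha
  set b := weylNumber m T₁ with hb
  have ha0 : 0 ≤ a := weylNumber_nonneg n T₀
  have hb0 : 0 ≤ b := weylNumber_nonneg m T₁
  have hθ' : (0:ℝ) < 1 - θ := by linarith
  -- main estimate for every ε > 0
  have key : ∀ ε : ℝ, 0 < ε →
      weylNumber (n + m - 1) T ≤ C * (a + ε) ^ (1 - θ) * (b + ε) ^ θ := by
    intro ε hε
    have hMpos : 0 ≤ C * (a + ε) ^ (1 - θ) * (b + ε) ^ θ := by
      have := Real.rpow_nonneg (x := a + ε) (by linarith) (1 - θ)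
      have := Real.rpow_nonneg (x := b + ε) (by linarith) θ
      positivity
    refine ciSup_le ?_
    rintro ⟨A, hA⟩
    -- choose finite rank approximants
    have hne₀ : Set.Nonempty {c : ℝ | ∃ B : Ell2 →L[ℝ] Y₀,
        FiniteDimensional ℝ (LinearMap.range (B : Ell2 →ₗ[ℝ] Y₀)) ∧
        Module.finrank ℝ (LinearMap.range (B : Ell2 →ₗ[ℝ] Y₀)) < n ∧ ‖T₀.comp A - B‖ = c} :=
      ⟨‖T₀.comp A‖, zero_mem_approxSet hn _⟩
    have hne₁ : Set.Nonempty {c : ℝ | ∃ B : Ell2 →L[ℝ] Y₁,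
        FiniteDimensional ℝ (LinearMap.range (B : Ell2 →ₗ[ℝ] Y₁)) ∧
        Module.finrank ℝ (LinearMap.range (B : Ell2 →ₗ[ℝ] Y₁)) < m ∧ ‖T₁.comp A - B‖ = c} :=
      ⟨‖T₁.comp A‖, zero_mem_approxSet hm _⟩
    obtain ⟨c₀, ⟨G₀, hG₀fd, hG₀rk, hG₀c⟩, hc₀⟩ := Real.lt_sInf_add_pos hne₀ hε
    obtain ⟨c₁, ⟨G₁, hG₁fd, hG₁rk, hG₁c⟩, hc₁⟩ := Real.lt_sInf_add_pos hne₁ hε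
    have hG₀ : ‖T₀.comp A - G₀‖ ≤ a + ε := by
      rw [hG₀c]
      refine hc₀.le.trans ?_
      have : sInf _ ≤ a := approxNumber_le_weylNumber hn T₀ A hA
      linarith [approxNumber_le_weylNumber hn T₀ A hA]
    have hG₁ : ‖T₁.comp A - G₁‖ ≤ b + ε := by
      rw [hG₁c]
      refine hc₁.le.trans ?_
      have h' : sInf _ ≤ b := approxNumber_le_weylNumber hm T₁ A hA
      linarith [approxNumber_le_weylNumber hm T₁ A hA]
    -- the kernel subspace
    set G : Ell2 →L[ℝ] Y₀ × Y₁ := G₀.prod G₁ with hGdef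
    set K : Submodule ℝ Ell2 := LinearMap.ker (G : Ell2 →ₗ[ℝ] Y₀ × Y₁) with hKdef
    have hKclosed : IsClosed (K : Set Ell2) := ContinuousLinearMap.isClosed_ker G
    haveI : CompleteSpace K := hKclosed.completeSpace_coe
    have hmemK : ∀ u : Ell2, u ∈ K → G₀ u = 0 ∧ G₁ u = 0 := by
      intro u hu
      have : G u = 0 := hu
      rw [hGdef] at this
      exact ⟨congrArg Prod.fst this, congrArg Prod.snd this⟩
    -- finrank of the orthogonal complement
    haveI hfdq : FiniteDimensional ℝ (Ell2 ⧸ K) := by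
      haveI : FiniteDimensional ℝ (LinearMap.range (G : Ell2 →ₗ[ℝ] Y₀ × Y₁)) := by
        have hle : LinearMap.range (G : Ell2 →ₗ[ℝ] Y₀ × Y₁) ≤
            ((LinearMap.range (G₀ : Ell2 →ₗ[ℝ] Y₀)).map (LinearMap.inl ℝ Y₀ Y₁)) ⊔
            ((LinearMap.range (G₁ : Ell2 →ₗ[ℝ] Y₁)).map (LinearMap.inr ℝ Y₀ Y₁)) := by
          rw [← LinearMap.prod_eq_sup_map]
          rintro y ⟨x, rfl⟩
          exact ⟨⟨x, rfl⟩, ⟨x, rfl⟩⟩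
        exact Submodule.finiteDimensional_of_le hle
      exact Module.Finite.equiv (LinearMap.quotKerEquivRange (G : Ell2 →ₗ[ℝ] Y₀ × Y₁)).symm
    set φ : Kᗮ →ₗ[ℝ] Ell2 ⧸ K := K.mkQ.comp Kᗮ.subtype with hφdef
    have hφinj : Function.Injective φ := by
      rw [← LinearMap.ker_eq_bot, LinearMap.ker_eq_bot']
      intro x hx
      have hxK : (x : Ell2) ∈ K := by
        have : K.mkQ (x : Ell2) = 0 := hx
        rwa [Submodule.mkQ_apply, Submodule.Quotient.mk_eq_zero] at this
      have : (x : Ell2) = 0 := by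
        have h2 := x.2
        rw [Submodule.mem_orthogonal] at h2
        have := h2 (x : Ell2) hxK
        rwa [inner_self_eq_zero] at this
      exact Subtype.ext this
    haveI hfdperp : FiniteDimensional ℝ Kᗮ := FiniteDimensional.of_injective φ hφinj
    have hrkperp : Module.finrank ℝ Kᗮ < n + m - 1 := by
      have h1 : Module.finrank ℝ Kᗮ ≤ Module.finrank ℝ (Ell2 ⧸ K) :=
        LinearMap.finrank_le_finrank_of_injective hφinj
      have h2 : Module.finrank ℝ (Ell2 ⧸ K) =
          Module.finrank ℝ (LinearMap.range (G : Ell2 →ₗ[ℝ] Y₀ × Y₁)) :=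
        (LinearMap.quotKerEquivRange (G : Ell2 →ₗ[ℝ] Y₀ × Y₁)).finrank_eq
      have hle : LinearMap.range (G : Ell2 →ₗ[ℝ] Y₀ × Y₁) ≤
          ((LinearMap.range (G₀ : Ell2 →ₗ[ℝ] Y₀)).map (LinearMap.inl ℝ Y₀ Y₁)) ⊔
          ((LinearMap.range (G₁ : Ell2 →ₗ[ℝ] Y₁)).map (LinearMap.inr ℝ Y₀ Y₁)) := by
        rw [← LinearMap.prod_eq_sup_map]
        rintro y ⟨x, rfl⟩
        exact ⟨⟨x, rfl⟩, ⟨x, rfl⟩⟩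
      have h3 : Module.finrank ℝ (LinearMap.range (G : Ell2 →ₗ[ℝ] Y₀ × Y₁)) ≤
          Module.finrank ℝ (((LinearMap.range (G₀ : Ell2 →ₗ[ℝ] Y₀)).map (LinearMap.inl ℝ Y₀ Y₁)) ⊔
            ((LinearMap.range (G₁ : Ell2 →ₗ[ℝ] Y₁)).map (LinearMap.inr ℝ Y₀ Y₁)) : Submodule ℝ (Y₀ × Y₁)) :=
        Submodule.finrank_mono hle
      have h4 := Submodule.finrank_add_le_finrank_add_finrank
        ((LinearMap.range (G₀ : Ell2 →ₗ[ℝ] Y₀)).map (LinearMap.inl ℝ Y₀ Y₁))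
        ((LinearMap.range (G₁ : Ell2 →ₗ[ℝ] Y₁)).map (LinearMap.inr ℝ Y₀ Y₁))
      have h5 : Module.finrank ℝ ((LinearMap.range (G₀ : Ell2 →ₗ[ℝ] Y₀)).map (LinearMap.inl ℝ Y₀ Y₁)) ≤
          Module.finrank ℝ (LinearMap.range (G₀ : Ell2 →ₗ[ℝ] Y₀)) := Submodule.finrank_map_le _ _
      have h6 : Module.finrank ℝ ((LinearMap.range (G₁ : Ell2 →ₗ[ℝ] Y₁)).map (LinearMap.inr ℝ Y₀ Y₁)) ≤
          Module.finrank ℝ (LinearMap.range (G₁ : Ell2 →ₗ[ℝ] Y₁)) := Submodule.finrank_map_le _ _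
      omega
    -- the orthogonal projection
    set P : Ell2 →L[ℝ] Ell2 := K.subtypeL.comp (K.orthogonalProjectionOnto) with hPdef
    have hPmem : ∀ x : Ell2, P x ∈ K := fun x => (K.orthogonalProjectionOnto x).2
    have hPnorm : ∀ x : Ell2, ‖P x‖ ≤ ‖x‖ := by
      intro x
      have : ‖P x‖ = ‖K.orthogonalProjectionOnto x‖ := rfl
      rw [this]
      calc ‖K.orthogonalProjectionOnto x‖ ≤ ‖K.orthogonalProjectionOnto‖ * ‖x‖ :=
            (K.orthogonalProjectionOnto).le_opNorm x
        _ ≤ 1 * ‖x‖ := by gcongr; exact K.orthogonalProjectionOnto_norm_le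
        _ = ‖x‖ := one_mul _
    have hPsub : ∀ x : Ell2, x - P x ∈ Kᗮ := fun x =>
      Submodule.sub_starProjection_mem_orthogonal (K := K) x
    -- the finite rank approximant of T ∘ A
    set F : Ell2 →L[ℝ] Y := (T.comp A).comp (ContinuousLinearMap.id ℝ Ell2 - P) with hFdef
    have hFapp : ∀ x : Ell2, F x = T (A (x - P x)) := by
      intro x; simp [hFdef]
    have hrangeF : LinearMap.range (F : Ell2 →ₗ[ℝ] Y) ≤
        Kᗮ.map ((T.comp A : Ell2 →L[ℝ] Y) : Ell2 →ₗ[ℝ] Y) := by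
      rintro y ⟨x, rfl⟩
      exact ⟨x - P x, hPsub x, (hFapp x).symm⟩
    haveI : FiniteDimensional ℝ
        (Kᗮ.map ((T.comp A : Ell2 →L[ℝ] Y) : Ell2 →ₗ[ℝ] Y)) := Module.Finite.map Kᗮ _
    haveI hFfd : FiniteDimensional ℝ (LinearMap.range (F : Ell2 →ₗ[ℝ] Y)) :=
      Submodule.finiteDimensional_of_le hrangeF
    have hFrk : Module.finrank ℝ (LinearMap.range (F : Ell2 →ₗ[ℝ] Y)) < n + m - 1 := by
      have h1 : Module.finrank ℝ (LinearMap.range (F : Ell2 →ₗ[ℝ] Y)) ≤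
          Module.finrank ℝ (Kᗮ.map ((T.comp A : Ell2 →L[ℝ] Y) : Ell2 →ₗ[ℝ] Y)) :=
        Submodule.finrank_mono hrangeF
      have h2 : Module.finrank ℝ
          (Kᗮ.map ((T.comp A : Ell2 →L[ℝ] Y) : Ell2 →ₗ[ℝ] Y)) ≤
          Module.finrank ℝ Kᗮ := Submodule.finrank_map_le _ _
      omega
    -- the norm estimate
    have hnormF : ‖T.comp A - F‖ ≤ C * (a + ε) ^ (1 - θ) * (b + ε) ^ θ := by
      refine ContinuousLinearMap.opNorm_le_bound _ hMpos ?_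
      intro x
      have hval : (T.comp A - F) x = T (A (P x)) := by
        rw [ContinuousLinearMap.sub_apply, hFapp x]
        rw [ContinuousLinearMap.comp_apply]
        rw [map_sub, map_sub, sub_sub_cancel]
      rw [hval]
      set u := P x with hu
      have huK := hPmem x
      obtain ⟨hG₀u, hG₁u⟩ := hmemK u huK
      have heq : j₀ (T₀ (A u)) = j₁ (T₁ (A u)) := by rw [← hT₀, ← hT₁]
      have hkey := hnorm (T₀ (A u)) (T₁ (A u)) heq
      have hT0u : ‖T₀ (A u)‖ ≤ (a + ε) * ‖u‖ := by
        have : T₀ (A u) = (T₀.comp A - G₀) u := by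
          rw [ContinuousLinearMap.sub_apply, ContinuousLinearMap.comp_apply, hG₀u, sub_zero]
        rw [this]
        calc ‖(T₀.comp A - G₀) u‖ ≤ ‖T₀.comp A - G₀‖ * ‖u‖ :=
              (T₀.comp A - G₀).le_opNorm u
          _ ≤ (a + ε) * ‖u‖ := by gcongr
      have hT1u : ‖T₁ (A u)‖ ≤ (b + ε) * ‖u‖ := by
        have : T₁ (A u) = (T₁.comp A - G₁) u := by
          rw [ContinuousLinearMap.sub_apply, ContinuousLinearMap.comp_apply, hG₁u, sub_zero]
        rw [this]
        calc ‖(T₁.comp A - G₁) u‖ ≤ ‖T₁.comp A - G₁‖ * ‖u‖ :=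
              (T₁.comp A - G₁).le_opNorm u
          _ ≤ (b + ε) * ‖u‖ := by gcongr
      have hTAu : ‖T (A u)‖ ≤ C * ‖T₀ (A u)‖ ^ (1 - θ) * ‖T₁ (A u)‖ ^ θ := by
        rw [hT₀]; exact hkey
      have haε : (0:ℝ) ≤ a + ε := by linarith
      have hbε : (0:ℝ) ≤ b + ε := by linarith
      have step1 : ‖T₀ (A u)‖ ^ (1 - θ) ≤ ((a + ε) * ‖u‖) ^ (1 - θ) :=
        Real.rpow_le_rpow (norm_nonneg _) hT0u hθ'.le
      have step2 : ‖T₁ (A u)‖ ^ θ ≤ ((b + ε) * ‖u‖) ^ θ :=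
        Real.rpow_le_rpow (norm_nonneg _) hT1u hθ₀.le
      have hfinal : ‖T (A u)‖ ≤ C * (a + ε) ^ (1 - θ) * (b + ε) ^ θ * ‖u‖ := by
        calc ‖T (A u)‖ ≤ C * ‖T₀ (A u)‖ ^ (1 - θ) * ‖T₁ (A u)‖ ^ θ := hTAu
          _ ≤ C * ((a + ε) * ‖u‖) ^ (1 - θ) * (((b + ε)) * ‖u‖) ^ θ := by
              have h1 : (0:ℝ) ≤ ‖T₁ (A u)‖ ^ θ := Real.rpow_nonneg (norm_nonneg _) θ
              have h2 : (0:ℝ) ≤ ((a + ε) * ‖u‖) ^ (1 - θ) :=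
                Real.rpow_nonneg (mul_nonneg haε (norm_nonneg _)) _
              have h3 : (0:ℝ) ≤ ‖T₀ (A u)‖ ^ (1 - θ) :=
                Real.rpow_nonneg (norm_nonneg _) _
              nlinarith [mul_le_mul step1 step2 h1 h2]
          _ = C * (a + ε) ^ (1 - θ) * (b + ε) ^ θ * (‖u‖ ^ (1 - θ) * ‖u‖ ^ θ) := by
              rw [Real.mul_rpow haε (norm_nonneg _), Real.mul_rpow hbε (norm_nonneg _)]
              ring
          _ = C * (a + ε) ^ (1 - θ) * (b + ε) ^ θ * ‖u‖ := by
              rw [← Real.rpow_add' (norm_nonneg _) (by norm_num)]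
              norm_num
      exact hfinal.trans (by have := hPnorm x; gcongr)
    calc approxNumber (n + m - 1) (T.comp A) ≤ ‖T.comp A - F‖ :=
          approxNumber_le _ F hFfd hFrk
      _ ≤ C * (a + ε) ^ (1 - θ) * (b + ε) ^ θ := hnormF
  -- take the limit ε → 0⁺
  have hcont : ContinuousAt (fun ε : ℝ => C * (a + ε) ^ (1 - θ) * (b + ε) ^ θ) 0 := by
    have h1 : ContinuousAt (fun ε : ℝ => (a + ε) ^ (1 - θ)) 0 :=
      (continuousAt_const.add continuousAt_id).rpow_const (Or.inr hθ'.le)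
    have h2 : ContinuousAt (fun ε : ℝ => (b + ε) ^ θ) 0 :=
      (continuousAt_const.add continuousAt_id).rpow_const (Or.inr hθ₀.le)
    exact (continuousAt_const.mul h1).mul h2
  have htend : Filter.Tendsto (fun ε : ℝ => C * (a + ε) ^ (1 - θ) * (b + ε) ^ θ)
      (nhdsWithin 0 (Set.Ioi 0)) (nhds (C * a ^ (1 - θ) * b ^ θ)) := by
    have h0 := hcont.tendsto
    have := h0.mono_left (nhdsWithin_le_nhds (s := Set.Ioi (0:ℝ)))
    simpa using this
  refine ge_of_tendsto htend ?_
  exact Filter.eventually_of_mem self_mem_nhdsWithin fun ε hε => key ε hε
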